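/- Fix gains k_p, k_θ, k_η, γ_s > 0. For any p ∈ ℝ² with ‖p − p_o‖ > r_o, θ ∈ ℝ and η ∈ ℝ², define g₁ = ∇V_nav(p) + (I₂ − R(θ))ᵀ(p_d − p_o), g₂ = γ_θ·θ − (p − p_o)ᵀΔR(θ)ᵀ(p_o − p_d), η̃ = η − σ(θ), ϖ = −k_θ·g₂, D_tσ = −R(θ)ᵀΔ(p_d − p_o)·ϖ, κ_s = D_tσ − k_η·η̃ − (k_p/γ_s)·g₁, and u = −k_p·∇V_nav(p) + k_p·η, where ∇V_nav(p) = p − p_d + ϱ·φ'(d_o(p))·(p − p_o)/‖p − p_o‖. Then ⟨g₁, u⟩ + g₂·ϖ + γ_s·⟨η̃, κ_s − D_tσ⟩ = −k_p·‖g₁‖² − k_θ·g₂² − γ_s·k_η·‖η̃‖². (This is the time derivative of the Lyapunov function V_s(p,η,θ) = 𝒱_nav(p,θ) + (γ_s/2)‖η − σ(θ)‖² along the smooth hybrid closed-loop flow.) -/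

import Mathlib

open Real Filter
open scoped RealInnerProductSpace Topology Matrix

noncomputable section

/-- The Euclidean plane. -/
abbrev E2 : Type := EuclideanSpace ℝ (Fin 2)

/-- The planar rotation matrix `R(θ)`. -/
def RotM (θ : ℝ) : Matrix (Fin 2) (Fin 2) ℝ :=
  !![Real.cos θ, -Real.sin θ; Real.sin θ, Real.cos θ]

/-- The matrix `Δ = [[0,-1],[1,0]]`. -/
def DeltaM : Matrix (Fin 2) (Fin 2) ℝ := !![0, -1; 1, 0]

/-- Reinterpret a plain vector as a point of the Euclidean plane. -/
def toE2 (v : Fin 2 → ℝ) : E2 := (WithLp.equiv 2 (Fin 2 → ℝ)).symm v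

/-- Reinterpret a point of the Euclidean plane as a plain vector. -/
def fromE2 (p : E2) : Fin 2 → ℝ := WithLp.equiv 2 (Fin 2 → ℝ) p

/-- A `2×2` matrix acting on a point of the Euclidean plane. -/
def mulV (M : Matrix (Fin 2) (Fin 2) ℝ) (p : E2) : E2 := toE2 (M.mulVec (fromE2 p))

/-- The barrier function `φ`. -/
def phi (rs z : ℝ) : ℝ := if z ≤ rs then (z - rs) ^ 2 * Real.log (rs / z) else 0

/-- The derivative `φ'` of the barrier function. -/
def phi' (rs z : ℝ) : ℝ :=
  if z ≤ rs then 2 * (z - rs) * Real.log (rs / z) - (z - rs) ^ 2 / z else 0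

/-- Distance to the obstacle, `d_o(p) = ‖p - p_o‖ - r_o`. -/
def dO (po : E2) (ro : ℝ) (p : E2) : ℝ := ‖p - po‖ - ro

/-- The free space `X_p = {p : ‖p - p_o‖ ≥ r_o + ε}`. -/
def Xp (po : E2) (ro ε : ℝ) : Set E2 := {p | ro + ε ≤ ‖p - po‖}

/-- The navigation function `V_nav`. -/
def Vnav (po pd : E2) (ro ϱ rs : ℝ) (p : E2) : ℝ :=
  (1 / 2) * ‖p - pd‖ ^ 2 + ϱ * phi rs (dO po ro p)

/-- The gradient `∇V_nav(p) = p - p_d + ϱ φ'(d_o(p)) (p - p_o)/‖p - p_o‖`. -/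
def gradVnav (po pd : E2) (ro ϱ rs : ℝ) (p : E2) : E2 :=
  (p - pd) + ((ϱ * phi' rs (dO po ro p)) / ‖p - po‖) • (p - po)

/-- The transformation `T(p,θ) = p_o + R(θ)(p - p_o)`. -/
def Tmap (po : E2) (p : E2) (θ : ℝ) : E2 := po + mulV (RotM θ) (p - po)

/-- The modified navigation function `𝒱_nav`. -/
def Vnav2 (po pd : E2) (ro ϱ rs γθ : ℝ) (p : E2) (θ : ℝ) : ℝ :=
  (1 / 2) * ‖Tmap po p θ - pd‖ ^ 2 + ϱ * phi rs (dO po ro p) + (γθ / 2) * θ ^ 2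

/-- The map `σ(θ) = (I₂ - R(θ))ᵀ (p_o - p_d)`. -/
def sigmaFn (po pd : E2) (θ : ℝ) : E2 := mulV ((1 - RotM θ)ᵀ) (po - pd)

/-- The time derivative of `V_s(p,η,θ) = 𝒱_nav(p,θ) + (γ_s/2)‖η - σ(θ)‖²`
along the smooth hybrid closed-loop flow:
`⟨g₁, u⟩ + g₂ ϖ + γ_s ⟨η̃, κ_s - D_tσ⟩ = -k_p ‖g₁‖² - k_θ g₂² - γ_s k_η ‖η̃‖²`. -/
theorem statement_6
    (po pd : E2) (ro ϱ rs γθ : ℝ) (kp kθ kη γs : ℝ)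
    (hro : 0 < ro) (hϱ : 0 < ϱ) (hrs : 0 < rs) (hγθ : 0 < γθ)
    (hkp : 0 < kp) (hkθ : 0 < kθ) (hkη : 0 < kη) (hγs : 0 < γs)
    (p : E2) (hp : ro < ‖p - po‖) (θ : ℝ) (η : E2)
    (g₁ : E2) (hg₁ : g₁ = gradVnav po pd ro ϱ rs p + mulV ((1 - RotM θ)ᵀ) (pd - po))
    (g₂ : ℝ) (hg₂ : g₂ = γθ * θ - ⟪p - po, mulV DeltaM (mulV ((RotM θ)ᵀ) (po - pd))⟫)
    (ηt : E2) (hηt : ηt = η - sigmaFn po pd θ)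
    (ϖ : ℝ) (hϖ : ϖ = -(kθ * g₂))
    (Dtσ : E2) (hDtσ : Dtσ = ϖ • (-(mulV ((RotM θ)ᵀ) (mulV DeltaM (pd - po)))))
    (κs : E2) (hκs : κs = Dtσ - kη • ηt - (kp / γs) • g₁)
    (u : E2) (hu : u = -(kp • gradVnav po pd ro ϱ rs p) + kp • η) :
    ⟪g₁, u⟫ + g₂ * ϖ + γs * ⟪ηt, κs - Dtσ⟫
      = -(kp * ‖g₁‖ ^ 2) - kθ * g₂ ^ 2 - γs * kη * ‖ηt‖ ^ 2 := by
  have hσ : sigmaFn po pd θ = -(mulV ((1 - RotM θ)ᵀ) (pd - po)) := by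
    have : po - pd = -(pd - po) := by abel
    rw [sigmaFn, this]
    simp only [mulV, fromE2, toE2, WithLp.equiv_apply, WithLp.equiv_symm_apply, WithLp.ofLp_neg, Matrix.mulVec_neg,
      WithLp.toLp_neg]
  have hu' : u = -(kp • g₁) + kp • ηt := by
    rw [hu, hηt, hσ, hg₁]
    module
  have hκ : κs - Dtσ = -(kη • ηt) - (kp / γs) • g₁ := by
    rw [hκs]; abel
  rw [hu', hκ, hϖ]
  simp only [inner_add_right, inner_sub_right, inner_neg_right, inner_smul_right,
    real_inner_self_eq_norm_sq, real_inner_comm ηt g₁]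
  field_simp
  ring
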